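/- Suppose n = 2m. For any potential outcome table w, the probability mass function of the Neyman estimator T(w, Z), where Z is the uniform random assignment into two equal groups, is symmetric about its expectation E[T(w,Z)] = τ(w): for every j in the lattice m^{-1}ℤ such that τ(w) + j lies in the support lattice, P(T(w,Z) = τ(w) − j) = P(T(w,Z) = τ(w) + j). -/

import Mathlib

open Finset

/-- Real value of a binary outcome. -/
noncomputable def b2r (b : Bool) : ℝ := if b then 1 else 0

/-- All assignments of `n` subjects in which exactly `m` receive treatment. -/
def Assign (n m : ℕ) : Finset (Fin n → Bool) :=
  Finset.univ.filter fun z => (Finset.univ.filter fun i => z i = true).card = m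

/-- Probability of the event `E` under the uniform distribution on `Assign n m`. -/
noncomputable def Pr (n m : ℕ) (E : (Fin n → Bool) → Prop) : ℝ :=
  haveI : DecidablePred E := fun z => Classical.propDecidable (E z)
  (((Assign n m).filter E).card : ℝ) / ((Assign n m).card : ℝ)

/-- The sample average treatment effect `τ(w)`.  For a table `w`, `(w i).1` is the
control potential outcome `w_i(0)` and `(w i).2` is the treatment potential outcome
`w_i(1)`. -/
noncomputable def sate (n : ℕ) (w : Fin n → Bool × Bool) : ℝ :=
  (∑ j, (b2r (w j).2 - b2r (w j).1)) / (n : ℝ)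

/-- Observed outcomes generated by the table `w` under the assignment `z`. -/
def obsOutcome (n : ℕ) (w : Fin n → Bool × Bool) (z : Fin n → Bool) : Fin n → Bool :=
  fun j => if z j then (w j).2 else (w j).1

/-- The Neyman difference-in-means estimator `T(Y, z)`. -/
noncomputable def neyman (n m : ℕ) (Y z : Fin n → Bool) : ℝ :=
  (∑ j, if z j then b2r (Y j) else 0) / (m : ℝ)
    - (∑ j, if z j then 0 else b2r (Y j)) / ((n : ℝ) - (m : ℝ))

/-- Permutation `p`-value of the table `w` given observed data `(Y, z)`. -/
noncomputable def pval (n m : ℕ) (w : Fin n → Bool × Bool) (Y z : Fin n → Bool) : ℝ :=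
  Pr n m fun z' =>
    |neyman n m (obsOutcome n w z') z' - sate n w| ≥ |neyman n m Y z - sate n w|

/-- The table `w` is possible given the observed data `(Y, z)`. -/
def PossibleTable (n : ℕ) (w : Fin n → Bool × Bool) (Y z : Fin n → Bool) : Prop :=
  ∀ j, (z j = true → (w j).2 = Y j) ∧ (z j = false → (w j).1 = Y j)

/-- Lower endpoint `L_α` of the exact confidence interval `I_α`. -/
noncomputable def Lb (n m : ℕ) (α : ℝ) (Y z : Fin n → Bool) : ℝ :=
  sInf {t : ℝ | ∃ w, PossibleTable n w Y z ∧ α ≤ pval n m w Y z ∧ sate n w = t}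

/-- Upper endpoint `U_α` of the exact confidence interval `I_α`. -/
noncomputable def Ub (n m : ℕ) (α : ℝ) (Y z : Fin n → Bool) : ℝ :=
  sSup {t : ℝ | ∃ w, PossibleTable n w Y z ∧ α ≤ pval n m w Y z ∧ sate n w = t}

/-- `vcount n w a b` is the number of subjects whose treatment potential outcome is `a`
and whose control potential outcome is `b`; e.g. `vcount n w true false = v₁₀`. -/
def vcount (n : ℕ) (w : Fin n → Bool × Bool) (a b : Bool) : ℕ :=
  (Finset.univ.filter fun i => (w i).2 = a ∧ (w i).1 = b).card

/-- `ncount n Y z a b = n_{ab}`, the number of subjects with assignment `a` and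
observed outcome `b`. -/
def ncount (n : ℕ) (Y z : Fin n → Bool) (a b : Bool) : ℕ :=
  (Finset.univ.filter fun j => z j = a ∧ Y j = b).card

/-- The pmf of the Neyman estimator `T(w, Z)` under the uniform random assignment. -/
noncomputable def pmfT (n m : ℕ) (w : Fin n → Bool × Bool) : ℝ → ℝ :=
  fun t => Pr n m fun z => neyman n m (obsOutcome n w z) z = t

/-- The lattice `m⁻¹ ℤ ⊆ ℝ`. -/
def lattZ (m : ℕ) : Set ℝ := {x | ∃ k : ℤ, x = (k : ℝ) / (m : ℝ)}

/-- The lattice `m⁻¹ (2ℤ) ⊆ ℝ`. -/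
def lattEven (m : ℕ) : Set ℝ := {x | ∃ k : ℤ, x = (2 * (k : ℝ)) / (m : ℝ)}

/-- The lattice `m⁻¹ (2ℤ + 1) ⊆ ℝ`. -/
def lattOdd (m : ℕ) : Set ℝ := {x | ∃ k : ℤ, x = (2 * (k : ℝ) + 1) / (m : ℝ)}

/-- `f` is symmetric about `μ` and decreasing away from `μ` along the lattice `L`
(symmetric–decreasing, SD). -/
def SDon (f : ℝ → ℝ) (L : Set ℝ) (μ : ℝ) : Prop :=
  (∀ x : ℝ, μ + x ∈ L → f (μ - x) = f (μ + x)) ∧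
    ∀ x y : ℝ, 0 ≤ x → x ≤ y → μ + x ∈ L → μ + y ∈ L → f (μ + y) ≤ f (μ + x)


private lemma arith_aux (m S2 S1 A B : ℝ) (hm : m ≠ 0) :
    (S2 - A)/m - (S1 - B)/m = 2*((S2-S1)/(2*m)) - (A/m - B/m) := by
  field_simp; ring

lemma neyman_flip (m n : ℕ) (hm : 0 < m) (hn : n = 2 * m) (w : Fin n → Bool × Bool) (z : Fin n → Bool) :
    neyman n m (obsOutcome n w (fun i => !z i)) (fun i => !z i)
      = 2 * sate n w - neyman n m (obsOutcome n w z) z := by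
  have hm' : (m : ℝ) ≠ 0 := Nat.cast_ne_zero.mpr hm.ne'
  have hnm : (n : ℝ) - (m : ℝ) = (m : ℝ) := by rw [hn]; push_cast; ring
  have h1 : (∑ i : Fin n, if (!z i) then b2r ((obsOutcome n w (fun i => !z i)) i) else 0)
      = (∑ i : Fin n, b2r (w i).2) - (∑ i : Fin n, if z i then b2r ((obsOutcome n w z) i) else 0) := by
    rw [← Finset.sum_sub_distrib]
    refine Finset.sum_congr rfl fun i _ => ?_
    cases hzi : z i <;> simp [obsOutcome, hzi]
  have h2 : (∑ i : Fin n, if (!z i) then (0:ℝ) else b2r ((obsOutcome n w (fun i => !z i)) i))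
      = (∑ i : Fin n, b2r (w i).1) - (∑ i : Fin n, if z i then (0:ℝ) else b2r ((obsOutcome n w z) i)) := by
    rw [← Finset.sum_sub_distrib]
    refine Finset.sum_congr rfl fun i _ => ?_
    cases hzi : z i <;> simp [obsOutcome, hzi]
  have hn' : (n : ℝ) = 2 * m := by rw [hn]; push_cast; ring
  simp only [neyman, h1, h2, hnm, sate, hn', Finset.sum_sub_distrib]
  rw [show 2*(m:ℝ) - m = m by ring]
  exact arith_aux _ _ _ _ _ hm'

lemma flip_mem (m n : ℕ) (hn : n = 2 * m) (z : Fin n → Bool)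
    (hz : z ∈ Assign n m) : (fun i => !z i) ∈ Assign n m := by
  simp only [Assign, Finset.mem_filter, Finset.mem_univ, true_and] at hz ⊢
  have : (Finset.univ.filter fun i => (!z i) = true)
      = (Finset.univ.filter fun i => z i = true)ᶜ := by ext i; simp
  rw [this, Finset.card_compl, hz]
  simp [hn]; omega


/-- In a balanced design, the pmf of the Neyman estimator `T(w, Z)` is
symmetric about its expectation `τ(w)`: for every `j` such that `τ(w) + j` lies in the
support lattice `m⁻¹ℤ`, we have `P(T(w,Z) = τ(w) − j) = P(T(w,Z) = τ(w) + j)`. -/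
theorem stmt5 (m : ℕ) (hm : 0 < m) (n : ℕ) (hn : n = 2 * m)
    (w : Fin n → Bool × Bool) (j : ℝ) (hj : sate n w + j ∈ lattZ m) :
    Pr n m (fun z => neyman n m (obsOutcome n w z) z = sate n w - j) =
      Pr n m (fun z => neyman n m (obsOutcome n w z) z = sate n w + j) := by
  classical
  unfold Pr
  congr 1
  norm_cast
  refine Finset.card_nbij' (fun z => fun i => !z i) (fun z => fun i => !z i) ?_ ?_ ?_ ?_
  · intro z hz
    simp only [Finset.mem_coe, Finset.mem_filter] at hz ⊢
    refine ⟨flip_mem m n hn z hz.1, ?_⟩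
    rw [neyman_flip m n hm hn w z, hz.2]
    ring
  · intro z hz
    simp only [Finset.mem_coe, Finset.mem_filter] at hz ⊢
    refine ⟨flip_mem m n hn z hz.1, ?_⟩
    rw [neyman_flip m n hm hn w z, hz.2]
    ring
  · intro z _; funext i; simp
  · intro z _; funext i; simp
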